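/- Let N ≥ 2, let ν ∈ ℝ^N be a unit vector, let η ≥ 0, δ > 0 and p₀ ∈ ℝ^N. Let S ⊆ ℝ^N be a closed set with p₀ ∈ S such that S ∩ B̄(p₀, 4δ) ⊆ {y ∈ ℝ^N : ((y−p₀)·ν)² ≤ (η²/(1+η²)) |y−p₀|²}. Then for every t ∈ ℝ with |t| ≤ 2δ one has |t|/√(1+η²) ≤ dist(p₀ + tν, S) ≤ |t|. -/

import Mathlib

set_option maxHeartbeats 1000000 in
/-- Let `ν` be a unit vector in `ℝ^N` (`N ≥ 2`), `η ≥ 0`, `δ > 0`, and let `S` be a closed set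
containing `p₀` such that inside the closed ball `B̄(p₀, 4δ)` the set `S` is contained in the cone
`{y : ((y - p₀) ⬝ ν)² ≤ η²/(1+η²) ‖y - p₀‖²}`. Then for every `t` with `|t| ≤ 2δ`,
`|t|/√(1+η²) ≤ dist (p₀ + t ν, S) ≤ |t|`. -/
theorem infDist_along_normal_bounds (N : ℕ) (hN : 2 ≤ N)
    (ν : EuclideanSpace ℝ (Fin N)) (hν : ‖ν‖ = 1) (η δ : ℝ) (hη : 0 ≤ η) (hδ : 0 < δ)
    (p₀ : EuclideanSpace ℝ (Fin N)) (S : Set (EuclideanSpace ℝ (Fin N)))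
    (hS : IsClosed S) (hp₀ : p₀ ∈ S)
    (hsub : S ∩ Metric.closedBall p₀ (4 * δ) ⊆
      {y : EuclideanSpace ℝ (Fin N) |
        (inner ℝ (y - p₀) ν : ℝ) ^ 2 ≤ (η ^ 2 / (1 + η ^ 2)) * ‖y - p₀‖ ^ 2})
    (t : ℝ) (ht : |t| ≤ 2 * δ) :
    |t| / Real.sqrt (1 + η ^ 2) ≤ Metric.infDist (p₀ + t • ν) S ∧
      Metric.infDist (p₀ + t • ν) S ≤ |t| := by
  have h1 : (0:ℝ) < 1 + η ^ 2 := by positivity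
  have hsq : (1:ℝ) ≤ Real.sqrt (1 + η ^ 2) := by
    nlinarith [Real.sq_sqrt h1.le, Real.sqrt_nonneg (1 + η ^ 2)]
  have hsqpos : (0:ℝ) < Real.sqrt (1 + η ^ 2) := lt_of_lt_of_le one_pos hsq
  have hcle : |t| / Real.sqrt (1 + η ^ 2) ≤ |t| :=
    div_le_self (abs_nonneg t) hsq
  have hc0 : 0 ≤ |t| / Real.sqrt (1 + η ^ 2) := by positivity
  have hdistp : dist (p₀ + t • ν) p₀ = |t| := by
    rw [dist_eq_norm]
    simp [norm_smul, hν]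
  constructor
  · by_contra hlt
    push_neg at hlt
    obtain ⟨y, hy, hdy⟩ := (Metric.infDist_lt_iff ⟨p₀, hp₀⟩).1 hlt
    have hge : |t| / Real.sqrt (1 + η ^ 2) ≤ dist (p₀ + t • ν) y := ?_
    · exact absurd hdy (not_lt.2 hge)
    by_cases hball : ‖y - p₀‖ ≤ 4 * δ
    · have hcone := hsub ⟨hy, by simpa [Metric.mem_closedBall, dist_eq_norm] using hball⟩
      simp only [Set.mem_setOf_eq] at hcone
      set r := ‖y - p₀‖ with hr
      set s := (inner ℝ (y - p₀) ν : ℝ) with hsdef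
      have hd2 : dist (p₀ + t • ν) y ^ 2 = t ^ 2 - 2 * t * s + r ^ 2 := by
        rw [dist_eq_norm]
        have h : p₀ + t • ν - y = t • ν - (y - p₀) := by abel
        have hs' : (inner ℝ ν (y - p₀) : ℝ) = s := by rw [hsdef, real_inner_comm]
        rw [h, norm_sub_sq_real, real_inner_smul_left, hs', norm_smul, hν, mul_one,
          Real.norm_eq_abs, sq_abs, ← hr]
        ring
      have hkey : t ^ 2 / (1 + η ^ 2) ≤ t ^ 2 - 2 * t * s + r ^ 2 := by
        rw [div_le_iff₀ h1]
        have hr0 : 0 ≤ r := norm_nonneg _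
        have hcone' : s ^ 2 * (1 + η ^ 2) ≤ η ^ 2 * r ^ 2 := by
          have h := mul_le_mul_of_nonneg_right hcone h1.le
          calc s ^ 2 * (1 + η ^ 2) ≤ η ^ 2 / (1 + η ^ 2) * r ^ 2 * (1 + η ^ 2) := h
            _ = η ^ 2 * r ^ 2 := by field_simp
        have h4 : (2 * t * s) ^ 2 * (1 + η ^ 2) ≤ 4 * t ^ 2 * η ^ 2 * r ^ 2 := by
          nlinarith [mul_le_mul_of_nonneg_left hcone' (by positivity : (0:ℝ) ≤ 4 * t ^ 2)]
        have hX : (0:ℝ) ≤ η ^ 2 * t ^ 2 + (1 + η ^ 2) * r ^ 2 := by positivity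
        have hAX : 2 * t * s * (1 + η ^ 2) ≤ η ^ 2 * t ^ 2 + (1 + η ^ 2) * r ^ 2 := by
          nlinarith [h4, sq_nonneg (η ^ 2 * t ^ 2 - (1 + η ^ 2) * r ^ 2), hX]
        nlinarith [hAX]
      have hd0 : 0 ≤ dist (p₀ + t • ν) y := dist_nonneg
      have hc2 : (|t| / Real.sqrt (1 + η ^ 2)) ^ 2 = t ^ 2 / (1 + η ^ 2) := by
        rw [div_pow, sq_abs, Real.sq_sqrt h1.le]
      have hsq2 : (|t| / Real.sqrt (1 + η ^ 2)) ^ 2 ≤ dist (p₀ + t • ν) y ^ 2 := by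
        rw [hc2, hd2]; exact hkey
      have := Real.sqrt_le_sqrt hsq2
      rwa [Real.sqrt_sq hc0, Real.sqrt_sq hd0] at this
    · push_neg at hball
      have h2 : dist (p₀ + t • ν) y ≥ ‖y - p₀‖ - |t| := by
        have := dist_triangle p₀ (p₀ + t • ν) y
        rw [dist_comm p₀ (p₀ + t • ν), hdistp] at this
        rw [dist_comm p₀ y, dist_eq_norm] at this
        linarith [this]
      calc |t| / Real.sqrt (1 + η ^ 2) ≤ |t| := hcle
        _ ≤ ‖y - p₀‖ - |t| := by linarith
        _ ≤ dist (p₀ + t • ν) y := h2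
  · calc Metric.infDist (p₀ + t • ν) S ≤ dist (p₀ + t • ν) p₀ :=
        Metric.infDist_le_dist_of_mem hp₀
      _ = |t| := hdistp
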